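/- Let B = {|i⟩}_{i=1}^d be an orthonormal basis of ℂ^d with projectors P_i, U a d×d unitary, and set |i'⟩ = U|i⟩. Let H be hermitian and {L_α}_α be matrices, all diagonal in the basis {|i'⟩}_i, with λ_{ij} = −i(E_i − E_j) + ∑_α ( (L_α)_{ii} · conj((L_α)_{jj}) − ½|(L_α)_{ii}|² − ½|(L_α)_{jj}|² ), where E_i = ⟨i'|H|i'⟩ and (L_α)_{ii} = ⟨i'|L_α|i'⟩, and let L be the associated Lindbladian. Then for every t ≥ 0, ∑_{i=1}^d ( ⟨e^{tL}(P_i), e^{tL}(P_i)⟩ − ⟨D_B(e^{tL}(P_i)), D_B(e^{tL}(P_i))⟩ ) = Tr( X_U Λ(t) X_Uᵀ ) − Tr( Y(t) Y(t)ᵀ ), where (X_U)_{ij} = |⟨i|U|j⟩|², Λ(t) is the d×d matrix with entries Λ(t)_{ij} = exp(2 Re(λ_{ij}) t), and Y(t) is the d×d matrix with entries Y(t)_{ij} = ∑_{k,l} exp(λ_{kl} t) · U_{il} · conj(U_{ik}) · U_{jk} · conj(U_{jl}). -/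

import Mathlib

open Matrix BigOperators

attribute [local instance] Matrix.frobeniusNormedAddCommGroup Matrix.frobeniusNormedSpace

instance frobeniusCLMIsTopologicalRing {d : ℕ} :
    IsTopologicalRing (Matrix (Fin d) (Fin d) ℂ →L[ℂ] Matrix (Fin d) (Fin d) ℂ) := by
  exact @NonUnitalSeminormedRing.toIsTopologicalRing _ (ContinuousLinearMap.toNormedRing (𝕜 := ℂ) (E := Matrix (Fin d) (Fin d) ℂ)).toNonUnitalNormedRing.toNonUnitalSeminormedRing

section cgpAux

variable {d : ℕ}

lemma vmv_mul_vmv (x y z u : Fin d → ℂ) :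
    vecMulVec x y * vecMulVec z u = (y ⬝ᵥ z) • vecMulVec x u := by
  ext a b
  simp only [mul_apply, vecMulVec_apply, Matrix.smul_apply, dotProduct, smul_eq_mul,
    Finset.sum_mul, Finset.mul_sum]
  exact Finset.sum_congr rfl fun c _ => by ring

lemma vmv_mul (x y : Fin d → ℂ) (M : Matrix (Fin d) (Fin d) ℂ) :
    vecMulVec x y * M = vecMulVec x (y ᵥ* M) := by
  ext a b
  simp only [mul_apply, vecMulVec_apply, vecMul, dotProduct, Finset.mul_sum]
  exact Finset.sum_congr rfl fun c _ => by ring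

lemma mul_vmv (x y : Fin d → ℂ) (M : Matrix (Fin d) (Fin d) ℂ) :
    M * vecMulVec x y = vecMulVec (M *ᵥ x) y := by
  ext a b
  simp only [mul_apply, vecMulVec_apply, mulVec, dotProduct, Finset.sum_mul]
  exact Finset.sum_congr rfl fun c _ => by ring

lemma vmv_mulVec (x y z : Fin d → ℂ) : vecMulVec x y *ᵥ z = (y ⬝ᵥ z) • x := by
  ext a
  simp only [mulVec, vecMulVec_apply, dotProduct, Pi.smul_apply, smul_eq_mul,
    Finset.sum_mul]
  exact Finset.sum_congr rfl fun c _ => by ring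

lemma trace_vmv (x y : Fin d → ℂ) : (vecMulVec x y).trace = x ⬝ᵥ y := by
  simp [Matrix.trace, Matrix.diag, vecMulVec_apply, dotProduct]

lemma conjTranspose_vmv (x y : Fin d → ℂ) :
    (vecMulVec x y)ᴴ = vecMulVec (star y) (star x) := by
  ext a b
  simp [vecMulVec_apply, conjTranspose_apply, mul_comm]

lemma smul_vmv (c : ℂ) (x y : Fin d → ℂ) :
    vecMulVec (c • x) y = c • vecMulVec x y := by
  ext a b; simp [vecMulVec_apply, mul_assoc]

lemma sum_mulVec' {ι : Type*} [Fintype ι] (f : ι → Matrix (Fin d) (Fin d) ℂ)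
    (x : Fin d → ℂ) : (∑ a, f a) *ᵥ x = ∑ a, f a *ᵥ x := by
  ext b
  simp only [mulVec, dotProduct, Matrix.sum_apply, Finset.sum_apply, Finset.sum_mul]
  exact Finset.sum_comm

lemma dotProduct_sum' {ι : Type*} [Fintype ι] (x : Fin d → ℂ) (f : ι → Fin d → ℂ) :
    x ⬝ᵥ (∑ a, f a) = ∑ a, x ⬝ᵥ f a := by
  simp only [dotProduct, Finset.sum_apply, Finset.mul_sum]
  exact Finset.sum_comm

lemma complete_of_orthonormal (v : Fin d → (Fin d → ℂ))
    (hv : ∀ i j, star (v i) ⬝ᵥ v j = if i = j then 1 else 0) :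
    ∑ i, vecMulVec (v i) (star (v i)) = (1 : Matrix (Fin d) (Fin d) ℂ) := by
  set V : Matrix (Fin d) (Fin d) ℂ := Matrix.of fun a i => v i a with hV
  have h1 : Vᴴ * V = 1 := by
    ext i j
    simpa [mul_apply, conjTranspose_apply, hV, dotProduct, one_apply] using hv i j
  have h2 : V * Vᴴ = 1 := mul_eq_one_comm.mp h1
  calc ∑ i, vecMulVec (v i) (star (v i)) = V * Vᴴ := by
        ext a b
        simp [Matrix.sum_apply, vecMulVec_apply, mul_apply, hV, conjTranspose_apply,
          mul_comm]
      _ = 1 := h2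

lemma vec_expand {w : Fin d → (Fin d → ℂ)}
    (hcomp : ∑ k, vecMulVec (w k) (star (w k)) = (1 : Matrix (Fin d) (Fin d) ℂ))
    (x : Fin d → ℂ) : x = ∑ a, (star (w a) ⬝ᵥ x) • w a := by
  calc x = (1 : Matrix (Fin d) (Fin d) ℂ) *ᵥ x := by simp
    _ = (∑ a, vecMulVec (w a) (star (w a))) *ᵥ x := by rw [hcomp]
    _ = ∑ a, vecMulVec (w a) (star (w a)) *ᵥ x := sum_mulVec' _ _
    _ = ∑ a, (star (w a) ⬝ᵥ x) • w a :=
        Finset.sum_congr rfl fun a _ => vmv_mulVec _ _ _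

lemma sandwich (x y : Fin d → ℂ) (M : Matrix (Fin d) (Fin d) ℂ) :
    vecMulVec x (star x) * M * vecMulVec y (star y)
      = (star x ⬝ᵥ (M *ᵥ y)) • vecMulVec x (star y) := by
  rw [vmv_mul, vmv_mul_vmv]
  congr 1
  exact (dotProduct_mulVec _ M y).symm

lemma matrix_expand {w : Fin d → (Fin d → ℂ)}
    (hcomp : ∑ k, vecMulVec (w k) (star (w k)) = (1 : Matrix (Fin d) (Fin d) ℂ))
    (M : Matrix (Fin d) (Fin d) ℂ) :
    M = ∑ k, ∑ l, (star (w k) ⬝ᵥ (M *ᵥ w l)) • vecMulVec (w k) (star (w l)) := by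
  calc M = (∑ k, vecMulVec (w k) (star (w k))) * M
            * (∑ l, vecMulVec (w l) (star (w l))) := by rw [hcomp]; simp
    _ = ∑ k, ∑ l, (star (w k) ⬝ᵥ (M *ᵥ w l)) • vecMulVec (w k) (star (w l)) := by
        rw [Finset.sum_mul, Finset.sum_mul]
        refine Finset.sum_congr rfl fun k _ => ?_
        rw [Finset.mul_sum]
        exact Finset.sum_congr rfl fun l _ => sandwich _ _ _

lemma dot_conjTranspose (M : Matrix (Fin d) (Fin d) ℂ) (x y : Fin d → ℂ) :
    star x ⬝ᵥ (Mᴴ *ᵥ y) = (starRingEnd ℂ) (star y ⬝ᵥ (M *ᵥ x)) := by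
  simp only [dotProduct, mulVec, conjTranspose_apply, map_sum, _root_.map_mul,
    Pi.star_apply, RCLike.star_def, Complex.conj_conj, Finset.mul_sum, Finset.sum_mul]
  rw [Finset.sum_comm]
  refine Finset.sum_congr rfl fun a _ => Finset.sum_congr rfl fun b _ => by ring

lemma eigvec_of_diag {w : Fin d → (Fin d → ℂ)}
    (hcomp : ∑ k, vecMulVec (w k) (star (w k)) = (1 : Matrix (Fin d) (Fin d) ℂ))
    {M : Matrix (Fin d) (Fin d) ℂ}
    (hM : ∀ i j, i ≠ j → star (w i) ⬝ᵥ (M *ᵥ w j) = 0) (k : Fin d) :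
    M *ᵥ w k = (star (w k) ⬝ᵥ (M *ᵥ w k)) • w k := by
  conv_lhs => rw [vec_expand hcomp (M *ᵥ w k)]
  rw [Finset.sum_eq_single k]
  · intro b _ hb
    rw [hM b k hb, zero_smul]
  · intro h; exact absurd (Finset.mem_univ k) h

lemma mul_E_of_diag {w : Fin d → (Fin d → ℂ)}
    (hcomp : ∑ k, vecMulVec (w k) (star (w k)) = (1 : Matrix (Fin d) (Fin d) ℂ))
    {M : Matrix (Fin d) (Fin d) ℂ}
    (hM : ∀ i j, i ≠ j → star (w i) ⬝ᵥ (M *ᵥ w j) = 0) (k l : Fin d) :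
    M * vecMulVec (w k) (star (w l))
      = (star (w k) ⬝ᵥ (M *ᵥ w k)) • vecMulVec (w k) (star (w l)) := by
  rw [mul_vmv]
  conv_lhs => rw [eigvec_of_diag hcomp hM k]
  rw [smul_vmv]

lemma diag_conjTranspose {w : Fin d → (Fin d → ℂ)} {M : Matrix (Fin d) (Fin d) ℂ}
    (hM : ∀ i j, i ≠ j → star (w i) ⬝ᵥ (M *ᵥ w j) = 0) :
    ∀ i j, i ≠ j → star (w i) ⬝ᵥ (Mᴴ *ᵥ w j) = 0 := by
  intro i j hij
  rw [dot_conjTranspose, hM j i (Ne.symm hij), map_zero]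

lemma E_mul_of_diag {w : Fin d → (Fin d → ℂ)}
    (hcomp : ∑ k, vecMulVec (w k) (star (w k)) = (1 : Matrix (Fin d) (Fin d) ℂ))
    {M : Matrix (Fin d) (Fin d) ℂ}
    (hM : ∀ i j, i ≠ j → star (w i) ⬝ᵥ (M *ᵥ w j) = 0) (k l : Fin d) :
    vecMulVec (w k) (star (w l)) * M
      = (star (w l) ⬝ᵥ (M *ᵥ w l)) • vecMulVec (w k) (star (w l)) := by
  have h1 : Mᴴ * vecMulVec (w l) (star (w k))
      = (star (w l) ⬝ᵥ (Mᴴ *ᵥ w l)) • vecMulVec (w l) (star (w k)) :=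
    mul_E_of_diag hcomp (diag_conjTranspose hM) l k
  have h2 := congrArg Matrix.conjTranspose h1
  simp only [Matrix.conjTranspose_mul, Matrix.conjTranspose_smul, conjTranspose_vmv,
    star_star, Matrix.conjTranspose_conjTranspose] at h2
  rw [h2]
  rw [dot_conjTranspose M (w l) (w l), RCLike.star_def, Complex.conj_conj]

lemma hs_trace_sum1 {ι : Type*} [Fintype ι] [DecidableEq ι]
    (E : ι → Matrix (Fin d) (Fin d) ℂ)
    (hE : ∀ a b, ((E a)ᴴ * E b).trace = if a = b then 1 else 0) (x y : ι → ℂ) :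
    ((∑ a, x a • E a)ᴴ * ∑ b, y b • E b).trace
      = ∑ a, (starRingEnd ℂ) (x a) * y a := by
  rw [Matrix.conjTranspose_sum, Finset.sum_mul_sum, Matrix.trace_sum]
  have h : ∀ a, ∑ b, ((x a • E a)ᴴ * (y b • E b)).trace
      = (starRingEnd ℂ) (x a) * y a := by
    intro a
    have h2 : ∀ b, ((x a • E a)ᴴ * (y b • E b)).trace
        = (starRingEnd ℂ) (x a) * y b * (if a = b then 1 else 0) := by
      intro b
      rw [Matrix.conjTranspose_smul, Matrix.smul_mul, Matrix.mul_smul,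
        Matrix.trace_smul, Matrix.trace_smul, hE, smul_eq_mul, smul_eq_mul,
        RCLike.star_def]
      ring
    simp_rw [h2]
    simp
  simp_rw [Matrix.trace_sum]
  exact Finset.sum_congr rfl fun a _ => h a

lemma hs_trace_sum2 (E : Fin d → Fin d → Matrix (Fin d) (Fin d) ℂ)
    (hE : ∀ k l k' l', ((E k l)ᴴ * E k' l').trace
      = if k = k' ∧ l = l' then 1 else 0) (x y : Fin d → Fin d → ℂ) :
    ((∑ k, ∑ l, x k l • E k l)ᴴ * ∑ k, ∑ l, y k l • E k l).trace
      = ∑ k, ∑ l, (starRingEnd ℂ) (x k l) * y k l := by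
  have h := hs_trace_sum1 (fun p : Fin d × Fin d => E p.1 p.2)
    (fun p q => by simpa [Prod.ext_iff] using hE p.1 p.2 q.1 q.2)
    (fun p => x p.1 p.2) (fun p => y p.1 p.2)
  simpa [Fintype.sum_prod_type] using h

lemma norm_sq_c (z : ℂ) : ((‖z‖ : ℂ)) ^ 2 = (starRingEnd ℂ) z * z := by
  calc ((‖z‖ : ℂ)) ^ 2 = ((‖z‖ ^ 2 : ℝ) : ℂ) := by push_cast; ring
    _ = ((Complex.normSq z : ℝ) : ℂ) := by
        rw [← Complex.sq_norm]
    _ = (starRingEnd ℂ) z * z := by rw [← Complex.mul_conj, mul_comm]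

lemma exp_apply_eigen (T : Matrix (Fin d) (Fin d) ℂ →L[ℂ] Matrix (Fin d) (Fin d) ℂ)
    (x : Matrix (Fin d) (Fin d) ℂ) (c : ℂ) (h : T x = c • x) :
    NormedSpace.exp T x = Complex.exp c • x := by
  letI R : NormedRing (Matrix (Fin d) (Fin d) ℂ →L[ℂ] Matrix (Fin d) (Fin d) ℂ) :=
    ContinuousLinearMap.toNormedRing (𝕜 := ℂ) (E := Matrix (Fin d) (Fin d) ℂ)
  letI : NormedAlgebra ℂ (Matrix (Fin d) (Fin d) ℂ →L[ℂ] Matrix (Fin d) (Fin d) ℂ) :=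
    ContinuousLinearMap.toNormedAlgebra
  haveI : CompleteSpace (Matrix (Fin d) (Fin d) ℂ) := FiniteDimensional.complete ℂ _
  letI : NormedAddCommGroup (Matrix (Fin d) (Fin d) ℂ →L[ℂ] Matrix (Fin d) (Fin d) ℂ) :=
    ContinuousLinearMap.toNormedAddCommGroup
  haveI hcs : CompleteSpace (Matrix (Fin d) (Fin d) ℂ →L[ℂ] Matrix (Fin d) (Fin d) ℂ) :=
    FiniteDimensional.complete ℂ _
  have hn : ∀ n : ℕ, (T ^ n) x = c ^ n • x := by
    intro n
    induction n with
    | zero => simp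
    | succ n ih =>
      rw [pow_succ, ContinuousLinearMap.mul_apply, h, _root_.map_smul, ih, smul_smul,
        ← pow_succ']
  have hsum := @NormedSpace.expSeries_summable' ℂ _ _ _ _ _ _ hcs T
  have h1 : NormedSpace.exp T x = ∑' n : ℕ, ((n.factorial : ℂ)⁻¹ • T ^ n) x := by
    rw [NormedSpace.exp_eq_tsum ℂ]
    exact (ContinuousLinearMap.apply ℂ (Matrix (Fin d) (Fin d) ℂ) x).map_tsum hsum
  rw [h1]
  have h2 : ∀ n : ℕ, ((n.factorial : ℂ)⁻¹ • T ^ n) x = ((n.factorial : ℂ)⁻¹ • c ^ n) • x := by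
    intro n
    rw [ContinuousLinearMap.smul_apply, hn, smul_smul, smul_eq_mul]
  simp_rw [h2]
  rw [Summable.tsum_smul_const (NormedSpace.expSeries_summable' (𝕂 := ℂ) c)]
  congr 1
  rw [Complex.exp_eq_exp_ℂ, NormedSpace.exp_eq_tsum ℂ]

end cgpAux

/-- The rank-one projector `|v i⟩⟨v i|`. -/
noncomputable def rankOneProj {d : ℕ} (v : Fin d → (Fin d → ℂ)) (i : Fin d) :
    Matrix (Fin d) (Fin d) ℂ :=
  Matrix.vecMulVec (v i) (star (v i))

/-- The dephasing superoperator `D_B(X) = ∑ i, P_i X P_i`. -/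
noncomputable def dephase {d : ℕ} (v : Fin d → (Fin d → ℂ))
    (X : Matrix (Fin d) (Fin d) ℂ) : Matrix (Fin d) (Fin d) ℂ :=
  ∑ i, rankOneProj v i * X * rankOneProj v i

/-- The Lindbladian `L(ρ) = −i[H,ρ] + ∑ α (L_α ρ L_α† − ½{L_α† L_α, ρ})` as a continuous
linear map on `d × d` complex matrices. -/
noncomputable def lindbladCLM {d N : ℕ} (H : Matrix (Fin d) (Fin d) ℂ)
    (L : Fin N → Matrix (Fin d) (Fin d) ℂ) :
    Matrix (Fin d) (Fin d) ℂ →L[ℂ] Matrix (Fin d) (Fin d) ℂ :=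
  LinearMap.toContinuousLinearMap <|
    (-Complex.I) • (LinearMap.mulLeft ℂ H - LinearMap.mulRight ℂ H) +
      ∑ α, ((LinearMap.mulLeft ℂ (L α)).comp (LinearMap.mulRight ℂ (L α)ᴴ)
        - (1 / 2 : ℂ) • (LinearMap.mulLeft ℂ ((L α)ᴴ * L α)
            + LinearMap.mulRight ℂ ((L α)ᴴ * L α)))

/-- The bistochastic matrix `(X_U)_{ij} = |⟨i|U|j⟩|²`. -/
noncomputable def xMat {d : ℕ} (v : Fin d → (Fin d → ℂ)) (U : Matrix (Fin d) (Fin d) ℂ) :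
    Matrix (Fin d) (Fin d) ℝ :=
  Matrix.of fun i j => ‖star (v i) ⬝ᵥ (U *ᵥ v j)‖ ^ 2

/-- The matrix `Λ(t)_{ij} = exp(2 Re(λ_{ij}) t)`. -/
noncomputable def lamMat {d : ℕ} (lam : Fin d → Fin d → ℂ) (t : ℝ) :
    Matrix (Fin d) (Fin d) ℝ :=
  Matrix.of fun i j => Real.exp (2 * (lam i j).re * t)

/-- The matrix `Y(t)_{ij} = ∑ k l, exp(λ_{kl} t) U_{il} conj(U_{ik}) U_{jk} conj(U_{jl})`,
where `U_{il} = ⟨i|U|l⟩` in the basis `{v i}`. -/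
noncomputable def yMat {d : ℕ} (v : Fin d → (Fin d → ℂ)) (U : Matrix (Fin d) (Fin d) ℂ)
    (lam : Fin d → Fin d → ℂ) (t : ℝ) : Matrix (Fin d) (Fin d) ℂ :=
  Matrix.of fun i j => ∑ k, ∑ l, Complex.exp (lam k l * t)
    * (star (v i) ⬝ᵥ (U *ᵥ v l)) * (starRingEnd ℂ) (star (v i) ⬝ᵥ (U *ᵥ v k))
    * (star (v j) ⬝ᵥ (U *ᵥ v k)) * (starRingEnd ℂ) (star (v j) ⬝ᵥ (U *ᵥ v l))

lemma lindblad_eigen {d N : ℕ} {w : Fin d → (Fin d → ℂ)}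
    (hcomp : ∑ k, vecMulVec (w k) (star (w k)) = (1 : Matrix (Fin d) (Fin d) ℂ))
    {H : Matrix (Fin d) (Fin d) ℂ}
    (hHdiag : ∀ i j, i ≠ j → star (w i) ⬝ᵥ (H *ᵥ w j) = 0)
    {L : Fin N → Matrix (Fin d) (Fin d) ℂ}
    (hLdiag : ∀ α, ∀ i j, i ≠ j → star (w i) ⬝ᵥ (L α *ᵥ w j) = 0)
    (k l : Fin d) :
    lindbladCLM H L (vecMulVec (w k) (star (w l)))
      = (-Complex.I * ((star (w k) ⬝ᵥ (H *ᵥ w k)) - (star (w l) ⬝ᵥ (H *ᵥ w l)))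
        + ∑ α, ((star (w k) ⬝ᵥ (L α *ᵥ w k))
              * (starRingEnd ℂ) (star (w l) ⬝ᵥ (L α *ᵥ w l))
          - (1 / 2 : ℂ) * ((starRingEnd ℂ) (star (w k) ⬝ᵥ (L α *ᵥ w k))
              * (star (w k) ⬝ᵥ (L α *ᵥ w k)))
          - (1 / 2 : ℂ) * ((starRingEnd ℂ) (star (w l) ⬝ᵥ (L α *ᵥ w l))
              * (star (w l) ⬝ᵥ (L α *ᵥ w l)))))
        • vecMulVec (w k) (star (w l)) := by
  set E := vecMulVec (w k) (star (w l)) with hE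
  set a : Fin N → ℂ := fun α => star (w k) ⬝ᵥ (L α *ᵥ w k) with ha
  set b : Fin N → ℂ := fun α => star (w l) ⬝ᵥ (L α *ᵥ w l) with hb
  have h1 : H * E = (star (w k) ⬝ᵥ (H *ᵥ w k)) • E := mul_E_of_diag hcomp hHdiag k l
  have h2 : E * H = (star (w l) ⬝ᵥ (H *ᵥ w l)) • E := E_mul_of_diag hcomp hHdiag k l
  have h3 : ∀ α, L α * E = a α • E := fun α => mul_E_of_diag hcomp (hLdiag α) k l
  have h5 : ∀ α, E * L α = b α • E := fun α => E_mul_of_diag hcomp (hLdiag α) k l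
  have h4 : ∀ α, E * (L α)ᴴ = (starRingEnd ℂ) (b α) • E := by
    intro α
    rw [E_mul_of_diag hcomp (diag_conjTranspose (hLdiag α)) k l, dot_conjTranspose]
  have h6 : ∀ α, (L α)ᴴ * E = (starRingEnd ℂ) (a α) • E := by
    intro α
    rw [mul_E_of_diag hcomp (diag_conjTranspose (hLdiag α)) k l, dot_conjTranspose]
  have hsum : ∀ α, L α * (E * (L α)ᴴ)
      - (1 / 2 : ℂ) • ((L α)ᴴ * L α * E + E * ((L α)ᴴ * L α))
      = (a α * (starRingEnd ℂ) (b α)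
          - (1 / 2 : ℂ) * ((starRingEnd ℂ) (a α) * a α)
          - (1 / 2 : ℂ) * ((starRingEnd ℂ) (b α) * b α)) • E := by
    intro α
    rw [h4, Matrix.mul_smul, h3, Matrix.mul_assoc ((L α)ᴴ) (L α) E, h3,
      Matrix.mul_smul, h6, ← Matrix.mul_assoc E ((L α)ᴴ) (L α), h4,
      Matrix.smul_mul, h5]
    module
  have hunfold : lindbladCLM H L E
      = (-Complex.I) • (H * E - E * H)
        + ∑ α, (L α * (E * (L α)ᴴ)
          - (1 / 2 : ℂ) • ((L α)ᴴ * L α * E + E * ((L α)ᴴ * L α))) := by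
    simp only [lindbladCLM, LinearMap.coe_toContinuousLinearMap', LinearMap.add_apply,
      LinearMap.smul_apply, LinearMap.sub_apply, LinearMap.sum_apply,
      LinearMap.comp_apply, LinearMap.mulLeft_apply, LinearMap.mulRight_apply]
  rw [hunfold, h1, h2]
  simp_rw [hsum]
  rw [← Finset.sum_smul]
  module

/-- **2-norm CGP of a maximally dephasing Lindbladian evolution as a function of time.**
Let `B = {v i}` be an orthonormal basis, `U` a unitary, `B' = {U (v i)}` the rotated
basis, `H` hermitian and every `L_α` diagonal in `B'`, with decay rates `λ_{ij}`.  Then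
for every `t ≥ 0`,
`∑ i (⟨e^{tL} P_i, e^{tL} P_i⟩ − ⟨D_B e^{tL} P_i, D_B e^{tL} P_i⟩)
  = Tr(X_U Λ(t) X_Uᵀ) − Tr(Y(t) Y(t)ᵀ)`. -/
theorem cgp_lindblad_time {d N : ℕ}
    (v : Fin d → (Fin d → ℂ))
    (hv : ∀ i j, star (v i) ⬝ᵥ v j = if i = j then 1 else 0)
    (U : Matrix (Fin d) (Fin d) ℂ) (hU : U ∈ Matrix.unitaryGroup (Fin d) ℂ)
    (w : Fin d → (Fin d → ℂ)) (hw : ∀ i, w i = U *ᵥ v i)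
    (H : Matrix (Fin d) (Fin d) ℂ) (hH : Hᴴ = H)
    (hHdiag : ∀ i j, i ≠ j → star (w i) ⬝ᵥ (H *ᵥ w j) = 0)
    (L : Fin N → Matrix (Fin d) (Fin d) ℂ)
    (hLdiag : ∀ α, ∀ i j, i ≠ j → star (w i) ⬝ᵥ (L α *ᵥ w j) = 0)
    (lam : Fin d → Fin d → ℂ)
    (hlam : ∀ i j, lam i j = -Complex.I
        * ((star (w i) ⬝ᵥ (H *ᵥ w i)) - (star (w j) ⬝ᵥ (H *ᵥ w j)))
      + ∑ α, ((star (w i) ⬝ᵥ (L α *ᵥ w i)) * (starRingEnd ℂ) (star (w j) ⬝ᵥ (L α *ᵥ w j))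
          - (1 / 2 : ℂ) * (‖star (w i) ⬝ᵥ (L α *ᵥ w i)‖ : ℂ) ^ 2
          - (1 / 2 : ℂ) * (‖star (w j) ⬝ᵥ (L α *ᵥ w j)‖ : ℂ) ^ 2))
    (t : ℝ) (ht : 0 ≤ t) :
    ∑ i, (((NormedSpace.exp (t • lindbladCLM H L) (rankOneProj v i))ᴴ *
            NormedSpace.exp (t • lindbladCLM H L) (rankOneProj v i)).trace
        - ((dephase v (NormedSpace.exp (t • lindbladCLM H L) (rankOneProj v i)))ᴴ *
            dephase v (NormedSpace.exp (t • lindbladCLM H L) (rankOneProj v i))).trace)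
      = (((xMat v U * lamMat lam t * (xMat v U)ᵀ).trace : ℝ) : ℂ)
        - (yMat v U lam t * (yMat v U lam t)ᵀ).trace := by
  classical
  have hUs : Uᴴ * U = 1 := by
    have := hU.1
    simpa [Matrix.star_eq_conjTranspose] using this
  have hw_on : ∀ i j, star (w i) ⬝ᵥ w j = if i = j then 1 else 0 := by
    intro i j
    rw [hw, hw, star_mulVec, dotProduct_mulVec, vecMul_vecMul, hUs, vecMul_one]
    exact hv i j
  have hw_comp := complete_of_orthonormal w hw_on
  set T := lindbladCLM H L with hT
  set u : Fin d → Fin d → ℂ := fun i k => star (v i) ⬝ᵥ w k with hu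
  set Ew : Fin d → Fin d → Matrix (Fin d) (Fin d) ℂ :=
    fun k l => vecMulVec (w k) (star (w l)) with hEw
  set c : Fin d → Fin d → Fin d → ℂ :=
    fun i k l => (starRingEnd ℂ) (u i k) * u i l * Complex.exp (lam k l * t) with hc
  set Y := yMat v U lam t with hY
  -- eigenvalue equation
  have hlam_eig : ∀ k l, T (Ew k l) = lam k l • Ew k l := by
    intro k l
    rw [hT, hEw, lindblad_eigen hw_comp hHdiag hLdiag k l, hlam]
    congr 2
    refine Finset.sum_congr rfl fun α _ => ?_
    rw [norm_sq_c, norm_sq_c]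
  have heig_t : ∀ k l,
      NormedSpace.exp (t • T) (Ew k l) = Complex.exp (lam k l * t) • Ew k l := by
    intro k l
    apply exp_apply_eigen
    rw [ContinuousLinearMap.smul_apply, hlam_eig, ← smul_assoc]
    congr 1
    rw [Complex.real_smul, mul_comm]
  -- star dot products
  have hustar : ∀ i k, star (w k) ⬝ᵥ v i = (starRingEnd ℂ) (u i k) := by
    intro i k
    rw [hu]
    simp only [RCLike.star_def]
    rw [← Complex.conj_conj (star (w k) ⬝ᵥ v i)]
    congr 1
    rw [← RCLike.star_def, star_dotProduct, star_star]
  have hustar' : ∀ i k, star (w k) ⬝ᵥ (v i) = (starRingEnd ℂ) (u i k) := hustar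
  -- expansion of the projector
  have hP : ∀ i, rankOneProj v i
      = ∑ k, ∑ l, ((starRingEnd ℂ) (u i k) * u i l) • Ew k l := by
    intro i
    conv_lhs => rw [show rankOneProj v i = vecMulVec (v i) (star (v i)) from rfl,
      matrix_expand hw_comp (vecMulVec (v i) (star (v i)))]
    refine Finset.sum_congr rfl fun k _ => Finset.sum_congr rfl fun l _ => ?_
    rw [hEw]
    congr 1
    rw [vmv_mulVec, dotProduct_smul, smul_eq_mul, hustar]
    rw [show star (v i) ⬝ᵥ w l = u i l from rfl]
    ring
  -- evolved projector
  have hA : ∀ i, NormedSpace.exp (t • T) (rankOneProj v i)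
      = ∑ k, ∑ l, c i k l • Ew k l := by
    intro i
    rw [hP i, map_sum]
    refine Finset.sum_congr rfl fun k _ => ?_
    rw [map_sum]
    refine Finset.sum_congr rfl fun l _ => ?_
    rw [_root_.map_smul, heig_t, smul_smul, hc]
  -- HS orthonormality of the Ew family
  have hEorth : ∀ k l k' l',
      ((Ew k l)ᴴ * Ew k' l').trace = if k = k' ∧ l = l' then 1 else 0 := by
    intro k l k' l'
    rw [hEw, conjTranspose_vmv, star_star, vmv_mul_vmv, Matrix.trace_smul, trace_vmv,
      dotProduct_comm (w l) (star (w l')), hw_on, hw_on]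
    by_cases h1 : k = k' <;> by_cases h2 : l = l' <;>
      simp [h1, h2, eq_comm]
  -- first trace
  have hT1 : ∀ i, ((NormedSpace.exp (t • T) (rankOneProj v i))ᴴ *
      NormedSpace.exp (t • T) (rankOneProj v i)).trace
      = ∑ k, ∑ l, (starRingEnd ℂ) (c i k l) * c i k l := by
    intro i
    rw [hA i, hs_trace_sum2 _ hEorth]
  -- the first right-hand side term
  have hRHS1 : (((xMat v U * lamMat lam t * (xMat v U)ᵀ).trace : ℝ) : ℂ)
      = ∑ i, ∑ k, ∑ l, (starRingEnd ℂ) (c i k l) * c i k l := by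
    have hterm : ∀ i k l, (starRingEnd ℂ) (c i k l) * c i k l
        = ((‖u i k‖ ^ 2 : ℝ) : ℂ) * ((‖u i l‖ ^ 2 : ℝ) : ℂ)
          * ((Real.exp (2 * (lam k l).re * t) : ℝ) : ℂ) := by
      intro i k l
      rw [hc]
      have hexp : (starRingEnd ℂ) (Complex.exp (lam k l * t)) * Complex.exp (lam k l * t)
          = ((Real.exp (2 * (lam k l).re * t) : ℝ) : ℂ) := by
        rw [← Complex.exp_conj, ← Complex.exp_add, Complex.ofReal_exp]
        congr 1
        rw [add_comm, Complex.add_conj]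
        congr 1
        simp [Complex.mul_re]
        ring
      have h1 : ((‖u i k‖ ^ 2 : ℝ) : ℂ) = (starRingEnd ℂ) (u i k) * u i k := by
        rw [← norm_sq_c]; push_cast; ring
      have h2 : ((‖u i l‖ ^ 2 : ℝ) : ℂ) = (starRingEnd ℂ) (u i l) * u i l := by
        rw [← norm_sq_c]; push_cast; ring
      rw [h1, h2, ← hexp]
      simp only [_root_.map_mul, Complex.conj_conj]
      ring
    simp_rw [hterm]
    have htr : ((xMat v U * lamMat lam t * (xMat v U)ᵀ).trace : ℝ)
        = ∑ i, ∑ k, ∑ l, (xMat v U i k * lamMat lam t k l * xMat v U i l) := by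
      simp only [Matrix.trace, Matrix.diag_apply, Matrix.mul_apply,
        Matrix.transpose_apply, Finset.sum_mul]
      refine Finset.sum_congr rfl fun i _ => ?_
      rw [Finset.sum_comm]
    rw [htr]
    push_cast
    refine Finset.sum_congr rfl fun i _ => Finset.sum_congr rfl fun k _ =>
      Finset.sum_congr rfl fun l _ => ?_
    simp only [xMat, lamMat, Matrix.of_apply, ← hw, hu]
    push_cast
    ring
  -- the dephased evolved projector
  have hdep : ∀ i, dephase v (NormedSpace.exp (t • T) (rankOneProj v i))
      = ∑ j, Y i j • rankOneProj v j := by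
    intro i
    rw [dephase]
    refine Finset.sum_congr rfl fun j _ => ?_
    rw [show rankOneProj v j = vecMulVec (v j) (star (v j)) from rfl, sandwich]
    rw [show vecMulVec (v j) (star (v j)) = rankOneProj v j from rfl]
    congr 1
    rw [hA i]
    rw [sum_mulVec', dotProduct_sum']
    rw [hY, yMat]
    simp only [Matrix.of_apply, ← hw]
    refine Finset.sum_congr rfl fun k _ => ?_
    rw [sum_mulVec', dotProduct_sum']
    refine Finset.sum_congr rfl fun l _ => ?_
    rw [Matrix.smul_mulVec, vmv_mulVec, smul_smul, dotProduct_smul, smul_eq_mul, hc]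
    rw [show (star (v i) ⬝ᵥ w k) = u i k from rfl,
      show (star (v i) ⬝ᵥ w l) = u i l from rfl,
      show (star (v j) ⬝ᵥ w k) = u j k from rfl,
      show (star (v j) ⬝ᵥ w l) = u j l from rfl]
    rw [show star (w l) ⬝ᵥ v j = (starRingEnd ℂ) (u j l) from hustar j l]
    dsimp only
    ring
  -- orthonormality of the projector family
  have hPorth : ∀ a b : Fin d,
      ((rankOneProj v a)ᴴ * rankOneProj v b).trace = if a = b then 1 else 0 := by
    intro a b
    rw [show rankOneProj v a = vecMulVec (v a) (star (v a)) from rfl,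
      show rankOneProj v b = vecMulVec (v b) (star (v b)) from rfl,
      conjTranspose_vmv, star_star, vmv_mul_vmv, Matrix.trace_smul, trace_vmv,
      dotProduct_comm (v a) (star (v b)), hv, hv]
    by_cases h1 : a = b <;> simp [h1, eq_comm]
  -- second trace
  have hT2 : ∀ i, ((dephase v (NormedSpace.exp (t • T) (rankOneProj v i)))ᴴ *
      dephase v (NormedSpace.exp (t • T) (rankOneProj v i))).trace
      = ∑ j, (starRingEnd ℂ) (Y i j) * Y i j := by
    intro i
    rw [hdep i, hs_trace_sum1 _ hPorth]
  -- conj lam symmetry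
  have hEreal : ∀ m, (starRingEnd ℂ) (star (w m) ⬝ᵥ (H *ᵥ w m))
      = star (w m) ⬝ᵥ (H *ᵥ w m) := by
    intro m
    rw [← dot_conjTranspose H (w m) (w m), hH]
  have hconjlam : ∀ k l, (starRingEnd ℂ) (lam k l) = lam l k := by
    intro k l
    rw [hlam, hlam, map_add]
    congr 1
    · rw [_root_.map_mul, map_sub, map_neg, Complex.conj_I, hEreal, hEreal]
      ring
    · rw [map_sum]
      refine Finset.sum_congr rfl fun α _ => ?_
      rw [map_sub, map_sub, _root_.map_mul, _root_.map_mul, _root_.map_mul,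
        Complex.conj_conj, map_pow, Complex.conj_ofReal, map_pow, Complex.conj_ofReal]
      rw [show (starRingEnd ℂ) (1 / 2 : ℂ) = (1 / 2 : ℂ) from by rw [map_div₀, _root_.map_one, map_ofNat]]
      ring
  -- Y is real
  have hYreal : ∀ i j, (starRingEnd ℂ) (Y i j) = Y i j := by
    intro i j
    rw [hY, yMat]
    simp only [Matrix.of_apply, map_sum]
    rw [Finset.sum_comm]
    refine Finset.sum_congr rfl fun k _ => Finset.sum_congr rfl fun l _ => ?_
    rw [_root_.map_mul, _root_.map_mul, _root_.map_mul, _root_.map_mul,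
      Complex.conj_conj, Complex.conj_conj, ← Complex.exp_conj, _root_.map_mul,
      Complex.conj_ofReal, hconjlam]
    ring
  -- the second right-hand side term
  have hRHS2 : (yMat v U lam t * (yMat v U lam t)ᵀ).trace
      = ∑ i, ∑ j, (starRingEnd ℂ) (Y i j) * Y i j := by
    rw [Matrix.trace]
    refine Finset.sum_congr rfl fun i _ => ?_
    rw [Matrix.diag_apply, Matrix.mul_apply]
    refine Finset.sum_congr rfl fun j _ => ?_
    rw [Matrix.transpose_apply, ← hY, hYreal]
  -- put everything together
  rw [Finset.sum_sub_distrib]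
  simp_rw [hT1, hT2]
  rw [hRHS1, hRHS2]
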